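/- (Verma–Kaur) For every integer k ≥ 3 and every complex number s with Re(s) ≥ q_2·k + 2, the k-th derivative of the Riemann zeta function does not vanish at s, i.e. iteratedDeriv k riemannZeta s ≠ 0. -/

import Mathlib

open Finset

/-- `q M = log(log M / log(M+1)) / log(M/(M+1))`, the slope of the `M`-th critical line. -/
noncomputable def q (M : ℕ) : ℝ :=
  Real.log (Real.log M / Real.log ((M : ℝ) + 1)) / Real.log ((M : ℝ) / ((M : ℝ) + 1))

namespace VK

lemma neg_log_one_sub_bounds {x : ℝ} (h0 : 0 ≤ x) (h1 : x < 1) (n : ℕ) :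
    (∑ i ∈ range n, x ^ (i + 1) / (i + 1)) - x ^ (n + 1) / (1 - x) ≤ -Real.log (1 - x) ∧
    -Real.log (1 - x) ≤ (∑ i ∈ range n, x ^ (i + 1) / (i + 1)) + x ^ (n + 1) / (1 - x) := by
  have h := Real.abs_log_sub_add_sum_range_le (by rwa [abs_of_nonneg h0]) n
  rw [abs_of_nonneg h0, abs_le] at h
  constructor <;> linarith [h.1, h.2]

lemma l32_lb : (0.4054559 : ℝ) ≤ Real.log (3 / 2) := by
  have h := (neg_log_one_sub_bounds (x := 1/3) (by norm_num) (by norm_num) 10).1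
  have e : (1 : ℝ) - 1/3 = (3/2)⁻¹ := by norm_num
  rw [e, Real.log_inv, neg_neg] at h
  refine le_trans ?_ h
  norm_num [Finset.sum_range_succ]

lemma l32_ub : Real.log (3 / 2) ≤ 0.4054729 := by
  have h := (neg_log_one_sub_bounds (x := 1/3) (by norm_num) (by norm_num) 10).2
  have e : (1 : ℝ) - 1/3 = (3/2)⁻¹ := by norm_num
  rw [e, Real.log_inv, neg_neg] at h
  refine h.trans ?_
  norm_num [Finset.sum_range_succ]

lemma log3_eq : Real.log 3 = Real.log 2 + Real.log (3 / 2) := by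
  rw [← Real.log_mul (by norm_num) (by norm_num)]; norm_num

lemma l3_lb : (1.098603 : ℝ) ≤ Real.log 3 := by
  rw [log3_eq]; linarith [Real.log_two_gt_d9, l32_lb]

lemma l3_ub : Real.log 3 ≤ 1.0986201 := by
  rw [log3_eq]; linarith [Real.log_two_lt_d9, l32_ub]

lemma l54_bounds : (0.2231420 : ℝ) ≤ Real.log (5 / 4) ∧ Real.log (5 / 4) ≤ 0.2231445 := by
  have h := neg_log_one_sub_bounds (x := 1/5) (by norm_num) (by norm_num) 8
  have e : (1 : ℝ) - 1/5 = (5/4)⁻¹ := by norm_num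
  rw [e, Real.log_inv, neg_neg] at h
  constructor
  · refine le_trans ?_ h.1; norm_num [Finset.sum_range_succ]
  · refine h.2.trans ?_; norm_num [Finset.sum_range_succ]

lemma l5_ub : Real.log 5 ≤ 1.6094389 := by
  have : Real.log 5 = Real.log 4 + Real.log (5 / 4) := by
    rw [← Real.log_mul (by norm_num) (by norm_num)]; norm_num
  have h4 : Real.log 4 = 2 * Real.log 2 := by
    rw [show (4 : ℝ) = 2 ^ 2 by norm_num, Real.log_pow]; push_cast; ring
  rw [this, h4]; linarith [Real.log_two_lt_d9, l54_bounds.2]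

lemma l52_lb : (0.9162891 : ℝ) ≤ Real.log (5 / 2) := by
  have : Real.log (5 / 2) = Real.log 2 + Real.log (5 / 4) := by
    rw [← Real.log_mul (by norm_num) (by norm_num)]; norm_num
  rw [this]; linarith [Real.log_two_gt_d9, l54_bounds.1]

lemma l78_bounds : (-0.1335315 : ℝ) ≤ Real.log (7 / 8) ∧ Real.log (7 / 8) ≤ -0.1335313 := by
  have h := neg_log_one_sub_bounds (x := 1/8) (by norm_num) (by norm_num) 8
  have e : (1 : ℝ) - 1/8 = 7/8 := by norm_num
  rw [e] at h
  constructor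
  · nlinarith [h.2, (show (∑ i ∈ range 8, (1/8 : ℝ) ^ (i + 1) / (i + 1)) + (1/8 : ℝ) ^ 9 / (1 - 1/8) ≤ 0.1335315 by norm_num [Finset.sum_range_succ])]
  · nlinarith [h.1, (show (0.1335313 : ℝ) ≤ (∑ i ∈ range 8, (1/8 : ℝ) ^ (i + 1) / (i + 1)) - (1/8 : ℝ) ^ 9 / (1 - 1/8) by norm_num [Finset.sum_range_succ])]

lemma l7_ub : Real.log 7 ≤ 1.9459103 := by
  have : Real.log 7 = Real.log 8 + Real.log (7 / 8) := by
    rw [← Real.log_mul (by norm_num) (by norm_num)]; norm_num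
  have h8 : Real.log 8 = 3 * Real.log 2 := by
    rw [show (8 : ℝ) = 2 ^ 3 by norm_num, Real.log_pow]; push_cast; ring
  rw [this, h8]; linarith [Real.log_two_lt_d9, l78_bounds.2]

lemma l72_lb : (1.2527628 : ℝ) ≤ Real.log (7 / 2) := by
  have : Real.log (7 / 2) = Real.log 4 + Real.log (7 / 8) := by
    rw [← Real.log_mul (by norm_num) (by norm_num)]; norm_num
  have h4 : Real.log 4 = 2 * Real.log 2 := by
    rw [show (4 : ℝ) = 2 ^ 2 by norm_num, Real.log_pow]; push_cast; ring
  rw [this, h4]; linarith [Real.log_two_gt_d9, l78_bounds.1]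

lemma l6_ub : Real.log 6 ≤ 1.7917673 := by
  have : Real.log 6 = Real.log 2 + Real.log 3 := by
    rw [← Real.log_mul (by norm_num) (by norm_num)]; norm_num
  rw [this]; linarith [Real.log_two_lt_d9, l3_ub]

lemma logR_lb : (0.4598405 : ℝ) ≤ Real.log (Real.log 3 / Real.log 2) := by
  have hR : (1000 / 631 : ℝ) ≤ Real.log 3 / Real.log 2 := by
    rw [div_le_div_iff₀ (by norm_num) (Real.log_pos (by norm_num))]
    nlinarith [l3_lb, Real.log_two_lt_d9]
  have h1 : Real.log (1000 / 631 : ℝ) ≤ Real.log (Real.log 3 / Real.log 2) :=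
    Real.log_le_log (by norm_num) hR
  refine le_trans ?_ h1
  have h := (neg_log_one_sub_bounds (x := 369/1000) (by norm_num) (by norm_num) 7).1
  have e : (1 : ℝ) - 369/1000 = (1000/631)⁻¹ := by norm_num
  rw [e, Real.log_inv, neg_neg] at h
  refine le_trans ?_ h
  norm_num [Finset.sum_range_succ]

lemma q2_eq : q 2 = Real.log (Real.log 3 / Real.log 2) / Real.log (3 / 2) := by
  unfold q
  have e1 : ((2 : ℕ) : ℝ) = 2 := by norm_num
  rw [e1]
  have e2 : (2 : ℝ) + 1 = 3 := by norm_num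
  rw [e2]
  rw [show Real.log 2 / Real.log 3 = (Real.log 3 / Real.log 2)⁻¹ by
        rw [inv_div], Real.log_inv,
      show (2 : ℝ) / 3 = (3 / 2)⁻¹ by norm_num, Real.log_inv, neg_div_neg_eq]

lemma q2_ge : (1.13 : ℝ) ≤ q 2 := by
  rw [q2_eq, le_div_iff₀ (by positivity : (0:ℝ) < Real.log (3/2))]
  · nlinarith [logR_lb, l32_ub]



noncomputable def g (n : ℕ) : ℝ := Real.log n * (n : ℝ) ^ (-(q 2))

lemma q2_pos : (0 : ℝ) < q 2 := lt_of_lt_of_le (by norm_num) q2_ge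

lemma one_le_q2 : (1 : ℝ) ≤ q 2 := le_trans (by norm_num) q2_ge

lemma g_nonneg {n : ℕ} (hn : 1 ≤ n) : 0 ≤ g n := by
  apply mul_nonneg (Real.log_nonneg (by exact_mod_cast hn)) (Real.rpow_nonneg (by positivity) _)

lemma g2_pos : 0 < g 2 := by
  apply mul_pos (Real.log_pos (by norm_num)) (Real.rpow_pos_of_pos (by norm_num) _)

lemma rpow_q2_32 : ((3 : ℝ) / 2) ^ (q 2) = Real.log 3 / Real.log 2 := by
  have h32 : (0 : ℝ) < Real.log (3 / 2) := Real.log_pos (by norm_num)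
  have hq : q 2 * Real.log (3 / 2) = Real.log (Real.log 3 / Real.log 2) := by
    rw [q2_eq, div_mul_cancel₀ _ (ne_of_gt h32)]
  rw [Real.rpow_def_of_pos (by norm_num), mul_comm, hq, Real.exp_log]
  exact div_pos (Real.log_pos (by norm_num)) (Real.log_pos (by norm_num))

lemma g3_eq_g2 : g 3 = g 2 := by
  unfold g
  have h3 : ((3 : ℕ) : ℝ) = 3 := by norm_num
  have h2 : ((2 : ℕ) : ℝ) = 2 := by norm_num
  rw [h3, h2]
  have e : (3 : ℝ) = 2 * (3 / 2) := by norm_num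
  rw [e, Real.mul_rpow (by norm_num) (by norm_num)]
  rw [Real.rpow_neg (by norm_num : (0:ℝ) ≤ 3/2)]
  rw [rpow_q2_32]
  have hl2 : Real.log 2 ≠ 0 := ne_of_gt (Real.log_pos (by norm_num))
  have hl3 : Real.log (2 * (3/2)) = Real.log 3 := by norm_num
  rw [hl3]
  field_simp

lemma g_succ_le {n : ℕ} (hn : 3 ≤ n) : g (n + 1) ≤ g n := by
  have hn3 : (3 : ℝ) ≤ (n : ℝ) := by exact_mod_cast hn
  have hn0 : (0 : ℝ) < (n : ℝ) := by linarith
  have hQ1 : (1 : ℝ) ≤ q 2 := one_le_q2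
  have hlogn : (1 : ℝ) ≤ Real.log n := by
    calc (1 : ℝ) ≤ 1.098603 := by norm_num
    _ ≤ Real.log 3 := l3_lb
    _ ≤ Real.log n := Real.log_le_log (by norm_num) hn3
  -- log (n+1) ≤ log n + 1/n
  have hlog : Real.log ((n : ℝ) + 1) ≤ Real.log n + 1 / n := by
    have h1 : Real.log (((n : ℝ) + 1) / n) ≤ ((n : ℝ) + 1) / n - 1 :=
      Real.log_le_sub_one_of_pos (by positivity)
    rw [Real.log_div (by positivity) (ne_of_gt hn0)] at h1
    have h2 : ((n : ℝ) + 1) / n - 1 = 1 / n := by field_simp; ring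
    linarith [h1, h2.le]
  -- Bernoulli
  have hbern : 1 + q 2 * (1 / n) ≤ (1 + 1 / (n : ℝ)) ^ (q 2) := by
    have h0 : (0:ℝ) ≤ 1 / (n:ℝ) := by positivity
    exact one_add_mul_self_le_rpow_one_add (by linarith) hQ1
  have hkey : Real.log ((n : ℝ) + 1) ≤ Real.log n * (1 + 1 / (n : ℝ)) ^ (q 2) := by
    have h3 : Real.log ((n : ℝ) + 1) ≤ Real.log n * (1 + q 2 * (1 / n)) := by
      have : (1 : ℝ) / n ≤ q 2 * Real.log n * (1 / n) := by
        have hn1 : (0 : ℝ) < 1 / (n : ℝ) := by positivity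
        have h1 : (1 : ℝ) ≤ q 2 * Real.log n := by nlinarith
        calc (1 : ℝ) / n = 1 * (1 / n) := by ring
        _ ≤ q 2 * Real.log ↑n * (1 / ↑n) := mul_le_mul_of_nonneg_right h1 hn1.le
      nlinarith [hlog, hlogn]
    calc Real.log ((n : ℝ) + 1) ≤ Real.log n * (1 + q 2 * (1 / n)) := h3
    _ ≤ Real.log n * (1 + 1 / (n : ℝ)) ^ (q 2) := by
        apply mul_le_mul_of_nonneg_left hbern (by linarith)
  -- combine
  have hprod : (1 + 1 / (n : ℝ)) ^ (q 2) * ((n : ℝ) + 1) ^ (-(q 2)) = (n : ℝ) ^ (-(q 2)) := by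
    have e1 : (1 : ℝ) + 1 / n = ((n : ℝ) + 1) / n := by field_simp
    rw [e1, Real.div_rpow (by positivity) (by positivity),
      Real.rpow_neg (by positivity : (0:ℝ) ≤ (n:ℝ) + 1), Real.rpow_neg hn0.le]
    have hp : (0 : ℝ) < ((n : ℝ) + 1) ^ (q 2) := Real.rpow_pos_of_pos (by linarith) _
    field_simp
  unfold g
  push_cast
  calc Real.log ((n : ℝ) + 1) * ((n : ℝ) + 1) ^ (-(q 2))
      ≤ Real.log n * (1 + 1 / (n : ℝ)) ^ (q 2) * ((n : ℝ) + 1) ^ (-(q 2)) := by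
        apply mul_le_mul_of_nonneg_right hkey (Real.rpow_nonneg (by positivity) _)
    _ = Real.log n * ((1 + 1 / (n : ℝ)) ^ (q 2) * ((n : ℝ) + 1) ^ (-(q 2))) := by ring
    _ = Real.log n * (n : ℝ) ^ (-(q 2)) := by rw [hprod]

lemma g_anti {m n : ℕ} (h3 : 3 ≤ m) (hmn : m ≤ n) : g n ≤ g m := by
  induction n, hmn using Nat.le_induction with
  | base => exact le_refl _
  | succ n hmn ih => exact le_trans (g_succ_le (le_trans h3 hmn)) ih

lemma g_le_aux {n : ℕ} (u lo hi P : ℝ) (hn : 2 ≤ n) (hu : 0 ≤ u) (hP0 : 0 < P)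
    (hhi : Real.log n ≤ hi) (hlo0 : 0 ≤ lo) (hlo : lo ≤ Real.log ((n : ℝ) / 2))
    (hP : P ≤ Real.exp (1.13 * lo)) (hfin : hi ≤ u * (0.6931471803 * P)) :
    g n ≤ u * g 2 := by
  have hn0 : (0 : ℝ) < (n : ℝ) := by positivity
  have hn2 : (2 : ℝ) ≤ (n : ℝ) := by exact_mod_cast hn
  have hlogn : 0 ≤ Real.log n := Real.log_nonneg (by linarith)
  have h2q : (0 : ℝ) < (2 : ℝ) ^ (-(q 2)) := Real.rpow_pos_of_pos (by norm_num) _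
  -- split n ^ (-q) = 2^(-q) * (n/2)^(-q)
  have hsplit : (n : ℝ) ^ (-(q 2)) = (2 : ℝ) ^ (-(q 2)) * ((n : ℝ) / 2) ^ (-(q 2)) := by
    rw [← Real.mul_rpow (by norm_num) (by positivity)]
    congr 1
    field_simp
  -- (n/2)^(-q) ≤ P⁻¹
  have hexp : ((n : ℝ) / 2) ^ (-(q 2)) ≤ P⁻¹ := by
    rw [Real.rpow_def_of_pos (by linarith [hn2] : (0:ℝ) < (n:ℝ)/2)]
    have h1 : 1.13 * lo ≤ Real.log ((n : ℝ) / 2) * (-(q 2)) * (-1) := by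
      have := q2_ge
      nlinarith [hlo, hlo0]
    have h2 : Real.exp (Real.log ((n : ℝ) / 2) * (-(q 2))) ≤ (Real.exp (1.13 * lo))⁻¹ := by
      rw [← Real.exp_neg]
      apply Real.exp_le_exp.mpr
      linarith
    refine h2.trans ?_
    exact inv_anti₀ hP0 hP
  have hg2 : g 2 = Real.log 2 * (2 : ℝ) ^ (-(q 2)) := by
    unfold g; norm_num
  have hgn : g n = Real.log n * ((2:ℝ) ^ (-(q 2)) * ((n:ℝ) / 2) ^ (-(q 2))) := by
    unfold g; rw [hsplit]
  rw [hgn, hg2]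
  calc Real.log n * ((2 : ℝ) ^ (-(q 2)) * ((n : ℝ) / 2) ^ (-(q 2)))
      = Real.log n * ((n : ℝ) / 2) ^ (-(q 2)) * (2 : ℝ) ^ (-(q 2)) := by ring
    _ ≤ hi * P⁻¹ * (2 : ℝ) ^ (-(q 2)) := by
        apply mul_le_mul_of_nonneg_right _ h2q.le
        apply mul_le_mul hhi hexp (Real.rpow_nonneg (by positivity) _) (le_trans hlogn hhi)
    _ ≤ u * 0.6931471803 * (2 : ℝ) ^ (-(q 2)) := by
        apply mul_le_mul_of_nonneg_right _ h2q.le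
        rw [← div_eq_mul_inv, div_le_iff₀ hP0]
        linarith
    _ ≤ u * (Real.log 2 * (2 : ℝ) ^ (-(q 2))) := by
        have h1 : (0.6931471803:ℝ) * (2:ℝ) ^ (-(q 2)) ≤ Real.log 2 * (2:ℝ) ^ (-(q 2)) :=
          mul_le_mul_of_nonneg_right Real.log_two_gt_d9.le h2q.le
        calc u * 0.6931471803 * (2:ℝ) ^ (-(q 2)) = u * (0.6931471803 * (2:ℝ) ^ (-(q 2))) := by ring
        _ ≤ u * (Real.log 2 * (2:ℝ) ^ (-(q 2))) := mul_le_mul_of_nonneg_left h1 hu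

lemma g4_le : g 4 ≤ 0.92 * g 2 := by
  refine g_le_aux (u := 0.92) (lo := 0.6931471803) (hi := 1.3862943616)
    (P := ∑ i ∈ range 10, (0.783256313739 : ℝ) ^ i / i.factorial)
    (by norm_num) (by norm_num) (by norm_num [Finset.sum_range_succ, Nat.factorial]) ?_
    (by norm_num) ?_ ?_ (by norm_num [Finset.sum_range_succ, Nat.factorial])
  · have e : ((4:ℕ):ℝ) = 4 := by norm_num
    rw [e, show (4:ℝ) = 2^2 by norm_num, Real.log_pow]
    push_cast
    nlinarith [Real.log_two_lt_d9]
  · have e : ((4:ℕ):ℝ)/2 = 2 := by norm_num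
    rw [e]; exact Real.log_two_gt_d9.le
  · rw [show (1.13:ℝ) * 0.6931471803 = 0.783256313739 by norm_num]
    exact Real.sum_le_exp_of_nonneg (by norm_num) 10

lemma g5_le : g 5 ≤ 0.83 * g 2 := by
  refine g_le_aux (u := 0.83) (lo := 0.9162891) (hi := 1.6094389)
    (P := ∑ i ∈ range 11, (1.035406683 : ℝ) ^ i / i.factorial)
    (by norm_num) (by norm_num) (by norm_num [Finset.sum_range_succ, Nat.factorial]) ?_
    (by norm_num) ?_ ?_ (by norm_num [Finset.sum_range_succ, Nat.factorial])
  · have e : ((5:ℕ):ℝ) = 5 := by norm_num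
    rw [e]; exact l5_ub.trans (by norm_num)
  · have e : ((5:ℕ):ℝ)/2 = 5/2 := by norm_num
    rw [e]; exact l52_lb
  · rw [show (1.13:ℝ) * 0.9162891 = 1.035406683 by norm_num]
    exact Real.sum_le_exp_of_nonneg (by norm_num) 11

lemma g6_le : g 6 ≤ 0.76 * g 2 := by
  refine g_le_aux (u := 0.76) (lo := 1.098603) (hi := 1.7917673)
    (P := ∑ i ∈ range 12, (1.24142139 : ℝ) ^ i / i.factorial)
    (by norm_num) (by norm_num) (by norm_num [Finset.sum_range_succ, Nat.factorial]) ?_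
    (by norm_num) ?_ ?_ (by norm_num [Finset.sum_range_succ, Nat.factorial])
  · have e : ((6:ℕ):ℝ) = 6 := by norm_num
    rw [e]; exact l6_ub
  · have e : ((6:ℕ):ℝ)/2 = 3 := by norm_num
    rw [e]; exact l3_lb
  · rw [show (1.13:ℝ) * 1.098603 = 1.24142139 by norm_num]
    exact Real.sum_le_exp_of_nonneg (by norm_num) 12

lemma g7_le : g 7 ≤ 0.70 * g 2 := by
  refine g_le_aux (u := 0.70) (lo := 1.2527628) (hi := 1.9459103)
    (P := ∑ i ∈ range 12, (1.415621964 : ℝ) ^ i / i.factorial)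
    (by norm_num) (by norm_num) (by norm_num [Finset.sum_range_succ, Nat.factorial]) ?_
    (by norm_num) ?_ ?_ (by norm_num [Finset.sum_range_succ, Nat.factorial])
  · have e : ((7:ℕ):ℝ) = 7 := by norm_num
    rw [e]; exact l7_ub
  · have e : ((7:ℕ):ℝ)/2 = 7/2 := by norm_num
    rw [e]; exact l72_lb
  · rw [show (1.13:ℝ) * 1.2527628 = 1.415621964 by norm_num]
    exact Real.sum_le_exp_of_nonneg (by norm_num) 12

lemma g8_le : g 8 ≤ 0.64 * g 2 := by
  refine g_le_aux (u := 0.64) (lo := 1.3862943606) (hi := 2.0794415424)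
    (P := ∑ i ∈ range 13, (1.566512627478 : ℝ) ^ i / i.factorial)
    (by norm_num) (by norm_num) (by norm_num [Finset.sum_range_succ, Nat.factorial]) ?_
    (by norm_num) ?_ ?_ (by norm_num [Finset.sum_range_succ, Nat.factorial])
  · have e : ((8:ℕ):ℝ) = 8 := by norm_num
    rw [e, show (8:ℝ) = 2^3 by norm_num, Real.log_pow]
    push_cast
    nlinarith [Real.log_two_lt_d9]
  · have e : ((8:ℕ):ℝ)/2 = 4 := by norm_num
    rw [e, show (4:ℝ) = 2^2 by norm_num, Real.log_pow]
    push_cast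
    nlinarith [Real.log_two_gt_d9]
  · rw [show (1.13:ℝ) * 1.3862943606 = 1.566512627478 by norm_num]
    exact Real.sum_le_exp_of_nonneg (by norm_num) 13

lemma key_bound {k : ℕ} (hk : 3 ≤ k) {σ : ℝ} (hσ : q 2 * k + 2 ≤ σ) {n : ℕ} (hn : 3 ≤ n)
    {u : ℝ} (hu0 : 0 ≤ u) (hu1 : u ≤ 1) (hg : g n ≤ u * g 2) :
    Real.log n ^ k * (n : ℝ) ^ (-σ) ≤
      u ^ 3 * (4 / (n : ℝ) ^ 2) * (Real.log 2 ^ k * (2 : ℝ) ^ (-σ)) := by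
  have hn3 : (3:ℝ) ≤ (n:ℝ) := by exact_mod_cast hn
  have hn0 : (0:ℝ) < (n:ℝ) := by linarith
  set c := σ - q 2 * k with hcdef
  have hc : 2 ≤ c := by rw [hcdef]; linarith
  have e : ∀ x : ℝ, 0 < x →
      Real.log x ^ k * x ^ (-σ) = (Real.log x * x ^ (-(q 2))) ^ k * x ^ (-c) := by
    intro x hx
    rw [mul_pow, ← Real.rpow_natCast (x ^ (-(q 2))) k, ← Real.rpow_mul hx.le,
      mul_assoc, ← Real.rpow_add hx]
    congr 2
    rw [hcdef]; ring
  have hgn : Real.log n ^ k * (n:ℝ) ^ (-σ) = g n ^ k * (n:ℝ) ^ (-c) := e (n:ℝ) hn0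
  have hg2e : Real.log 2 ^ k * (2:ℝ) ^ (-σ) = g 2 ^ k * (2:ℝ) ^ (-c) := by
    have h2 : g 2 = Real.log 2 * (2:ℝ) ^ (-(q 2)) := by unfold g; norm_num
    rw [e 2 (by norm_num), h2]
  rw [hgn, hg2e]
  have h1 : g n ^ k ≤ u ^ 3 * g 2 ^ k := by
    calc g n ^ k ≤ (u * g 2) ^ k := pow_le_pow_left₀ (g_nonneg (by omega)) hg k
      _ = u ^ k * g 2 ^ k := mul_pow u (g 2) k
      _ ≤ u ^ 3 * g 2 ^ k := by
          apply mul_le_mul_of_nonneg_right (pow_le_pow_of_le_one hu0 hu1 hk)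
            (pow_nonneg g2_pos.le k)
  have h2 : (n:ℝ) ^ (-c) ≤ (2:ℝ) ^ (-c) * (4 / (n:ℝ) ^ 2) := by
    have hsplit : (n:ℝ) ^ (-c) = (2:ℝ) ^ (-c) * ((n:ℝ)/2) ^ (-c) := by
      rw [← Real.mul_rpow (by norm_num) (by positivity)]
      congr 1
      field_simp
    rw [hsplit]
    apply mul_le_mul_of_nonneg_left _ (Real.rpow_nonneg (by norm_num) _)
    calc ((n:ℝ)/2) ^ (-c) ≤ ((n:ℝ)/2) ^ (-(2:ℝ)) :=
          Real.rpow_le_rpow_of_exponent_le (by linarith) (by linarith)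
      _ = 4 / (n:ℝ) ^ 2 := by
          rw [show (-(2:ℝ)) = ((-2 : ℤ) : ℝ) by norm_num, Real.rpow_intCast]
          rw [zpow_neg, show ((2:ℤ)) = ((2:ℕ):ℤ) by norm_num, zpow_natCast]
          field_simp
          ring
  calc g n ^ k * (n:ℝ) ^ (-c) ≤ (u ^ 3 * g 2 ^ k) * ((2:ℝ) ^ (-c) * (4 / (n:ℝ) ^ 2)) := by
        exact mul_le_mul h1 h2 (Real.rpow_nonneg hn0.le _) (mul_nonneg (pow_nonneg hu0 3) (pow_nonneg g2_pos.le k))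
    _ = u ^ 3 * (4 / (n:ℝ) ^ 2) * (g 2 ^ k * (2:ℝ) ^ (-c)) := by ring

lemma logMul_iterate (k n : ℕ) : (LSeries.logMul^[k] (1 : ℕ → ℂ)) n = Complex.log n ^ k := by
  induction k with
  | zero => simp
  | succ k ih =>
      rw [Function.iterate_succ_apply', LSeries.logMul, ih, pow_succ]
      ring

lemma norm_term_eq (k : ℕ) (s : ℂ) {n : ℕ} (hn : 1 ≤ n) :
    ‖LSeries.term (LSeries.logMul^[k] (1 : ℕ → ℂ)) s n‖
      = Real.log n ^ k * (n : ℝ) ^ (-s.re) := by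
  rw [LSeries.term_of_ne_zero (by omega), logMul_iterate, norm_div, norm_pow,
    ← Complex.natCast_log, Complex.norm_real, Real.norm_eq_abs,
    abs_of_nonneg (Real.log_nonneg (by exact_mod_cast hn)),
    Complex.norm_natCast_cpow_of_pos (by omega), Real.rpow_neg (by positivity),
    div_eq_mul_inv]

lemma tail_tsum_le : ∑' n : ℕ, (1:ℝ) / ((n:ℝ) + 8) ^ 2 ≤ 1/7 := by
  apply Real.tsum_le_of_sum_range_le (fun n => by positivity)
  intro n
  have htel := Finset.sum_range_sub' (f := fun j : ℕ => 1 / ((j:ℝ) + 7)) n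
  have hstep : ∀ i : ℕ, (1:ℝ) / ((i:ℝ) + 8) ^ 2 ≤
      (fun j : ℕ => 1 / ((j:ℝ) + 7)) i - (fun j : ℕ => 1 / ((j:ℝ) + 7)) (i + 1) := by
    intro i
    simp only
    push_cast
    have h1 : (0:ℝ) < (i:ℝ) + 7 := by positivity
    calc (1:ℝ) / ((i:ℝ) + 8) ^ 2 ≤ 1 / (((i:ℝ) + 7) * ((i:ℝ) + 8)) := by
          apply one_div_le_one_div_of_le (by positivity)
          nlinarith
      _ = 1 / ((i:ℝ) + 7) - 1 / ((i:ℝ) + 1 + 7) := by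
          rw [show (i:ℝ) + 1 + 7 = (i:ℝ) + 8 by ring]
          field_simp
          ring
  have hfn : (0:ℝ) ≤ 1 / ((n:ℝ) + 7) := by positivity
  calc ∑ i ∈ range n, (1:ℝ) / ((i:ℝ) + 8) ^ 2
      ≤ ∑ i ∈ range n, ((fun j : ℕ => 1 / ((j:ℝ) + 7)) i -
          (fun j : ℕ => 1 / ((j:ℝ) + 7)) (i + 1)) :=
        Finset.sum_le_sum (fun i _ => hstep i)
    _ = 1 / (((0:ℕ):ℝ) + 7) - 1 / ((n:ℝ) + 7) := htel
    _ ≤ 1/7 := by norm_num; positivity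

end VK

set_option maxHeartbeats 2000000 in
open VK in
/-- (Verma–Kaur) For every integer `k ≥ 3` and every complex `s` with
`Re s ≥ q 2 * k + 2`, the `k`-th derivative of the Riemann zeta function does not vanish
at `s`. -/
theorem zeta_deriv_ne_zero_verma_kaur (k : ℕ) (hk : 3 ≤ k) (s : ℂ)
    (h : q 2 * k + 2 ≤ s.re) :
    iteratedDeriv k riemannZeta s ≠ 0 := by
  have hq := q2_ge
  have hk3 : (3:ℝ) ≤ (k:ℝ) := by exact_mod_cast hk
  have h1s : 1 < s.re := by nlinarith
  -- transfer to the L-series of the constant function 1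
  have hopen : IsOpen {z : ℂ | 1 < z.re} := isOpen_lt continuous_const Complex.continuous_re
  have heq : Set.EqOn riemannZeta (LSeries 1) {z : ℂ | 1 < z.re} := fun z hz =>
    (LSeries_one_eq_riemannZeta hz).symm
  rw [heq.iteratedDeriv_of_isOpen hopen k h1s]
  have habs : LSeries.abscissaOfAbsConv 1 < s.re := by
    rw [LSeries.abscissaOfAbsConv_one]; exact_mod_cast h1s
  rw [LSeries_iteratedDeriv k habs]
  apply mul_ne_zero (pow_ne_zero _ (by norm_num))
  -- the L-series of (log)^k does not vanish at s
  set F := LSeries.logMul^[k] (1 : ℕ → ℂ) with hF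
  have habsF : LSeries.abscissaOfAbsConv F < s.re := by
    rw [hF, LSeries.absicssaOfAbsConv_logPowMul]; exact habs
  have hsum : LSeriesSummable F s := LSeriesSummable_of_abscissaOfAbsConv_lt_re habsF
  have hnorm : Summable (fun n => ‖LSeries.term F s n‖) := summable_norm_iff.mpr hsum
  set A := Real.log 2 ^ k * (2:ℝ) ^ (-s.re) with hA
  have hA0 : 0 < A :=
    mul_pos (pow_pos (Real.log_pos one_lt_two) k) (Real.rpow_pos_of_pos two_pos _)
  -- individual term bounds
  have hb : ∀ n : ℕ, 3 ≤ n → ∀ u : ℝ, 0 ≤ u → u ≤ 1 → g n ≤ u * g 2 →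
      ‖LSeries.term F s n‖ ≤ u ^ 3 * (4 / (n:ℝ) ^ 2) * A := by
    intro n hn u hu0 hu1 hgn
    rw [hF, norm_term_eq k s (by omega), hA]
    exact key_bound hk h hn hu0 hu1 hgn
  have hb3 : ‖LSeries.term F s 3‖ ≤ (4/9 : ℝ) * A :=
    le_trans (hb 3 (by norm_num) 1 (by norm_num) (by norm_num) (by rw [one_mul, g3_eq_g2]))
      (le_of_eq (by norm_num))
  have hb4 : ‖LSeries.term F s 4‖ ≤ ((0.92:ℝ) ^ 3 * (4/16)) * A :=
    le_trans (hb 4 (by norm_num) 0.92 (by norm_num) (by norm_num) g4_le)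
      (le_of_eq (by norm_num))
  have hb5 : ‖LSeries.term F s 5‖ ≤ ((0.83:ℝ) ^ 3 * (4/25)) * A :=
    le_trans (hb 5 (by norm_num) 0.83 (by norm_num) (by norm_num) g5_le)
      (le_of_eq (by norm_num))
  have hb6 : ‖LSeries.term F s 6‖ ≤ ((0.76:ℝ) ^ 3 * (4/36)) * A :=
    le_trans (hb 6 (by norm_num) 0.76 (by norm_num) (by norm_num) g6_le)
      (le_of_eq (by norm_num))
  have hb7 : ‖LSeries.term F s 7‖ ≤ ((0.70:ℝ) ^ 3 * (4/49)) * A :=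
    le_trans (hb 7 (by norm_num) 0.70 (by norm_num) (by norm_num) g7_le)
      (le_of_eq (by norm_num))
  -- the tail from n = 8 on
  have hnorm8 : Summable (fun n : ℕ => ‖LSeries.term F s (n + 8)‖) :=
    (summable_nat_add_iff 8).mpr hnorm
  have hmaj : Summable (fun n : ℕ => ((0.64:ℝ) ^ 3 * 4 * A) * (1 / ((n:ℝ) + 8) ^ 2)) := by
    have h0 : Summable (fun n : ℕ => 1 / ((n:ℝ)) ^ 2) :=
      Real.summable_one_div_nat_pow.mpr one_lt_two
    have h1 := (summable_nat_add_iff (f := fun n : ℕ => 1 / ((n:ℝ)) ^ 2) 8).mpr h0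
    refine (h1.congr ?_).mul_left _
    intro n; push_cast; ring
  have hper : ∀ n : ℕ, ‖LSeries.term F s (n + 8)‖ ≤
      ((0.64:ℝ) ^ 3 * 4 * A) * (1 / ((n:ℝ) + 8) ^ 2) := by
    intro n
    have hg8 : g (n + 8) ≤ 0.64 * g 2 := le_trans (g_anti (by norm_num) (by omega)) g8_le
    refine (hb (n+8) (by omega) 0.64 (by norm_num) (by norm_num) hg8).trans (le_of_eq ?_)
    push_cast
    ring
  have htail : ∑' n : ℕ, ‖LSeries.term F s (n + 8)‖ ≤ (0.64:ℝ) ^ 3 * (4/7) * A := by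
    calc ∑' n : ℕ, ‖LSeries.term F s (n + 8)‖
        ≤ ∑' n : ℕ, ((0.64:ℝ) ^ 3 * 4 * A) * (1 / ((n:ℝ) + 8) ^ 2) :=
          Summable.tsum_le_tsum hper hnorm8 hmaj
      _ = ((0.64:ℝ) ^ 3 * 4 * A) * ∑' n : ℕ, (1:ℝ) / ((n:ℝ) + 8) ^ 2 := tsum_mul_left
      _ ≤ ((0.64:ℝ) ^ 3 * 4 * A) * (1/7) := by
          apply mul_le_mul_of_nonneg_left tail_tsum_le
          nlinarith [hA0]
      _ = (0.64:ℝ) ^ 3 * (4/7) * A := by ring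
  -- the sum over n ≥ 3
  have hnorm3 : Summable (fun n : ℕ => ‖LSeries.term F s (n + 3)‖) :=
    (summable_nat_add_iff 3).mpr hnorm
  have hR : ‖∑' n : ℕ, LSeries.term F s (n + 3)‖ ≤ 0.958 * A := by
    refine (norm_tsum_le_tsum_norm hnorm3).trans ?_
    rw [← Summable.sum_add_tsum_nat_add (f := fun n : ℕ => ‖LSeries.term F s (n + 3)‖) 5 hnorm3]
    have e58 : ∑' n : ℕ, ‖LSeries.term F s (n + 5 + 3)‖
        = ∑' n : ℕ, ‖LSeries.term F s (n + 8)‖ := by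
      apply tsum_congr; intro n; congr 2
    rw [Finset.sum_range_succ, Finset.sum_range_succ, Finset.sum_range_succ,
      Finset.sum_range_succ, Finset.sum_range_one]
    simp only [Nat.reduceAdd]
    rw [e58]
    linarith [hb3, hb4, hb5, hb6, hb7, htail]
  -- conclusion
  have hsplit : LSeries F s = LSeries.term F s 2 + ∑' n : ℕ, LSeries.term F s (n + 3) := by
    rw [LSeries, ← Summable.sum_add_tsum_nat_add (f := fun n : ℕ => LSeries.term F s n) 3 hsum]
    congr 1
    rw [Finset.sum_range_succ, Finset.sum_range_succ, Finset.sum_range_one]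
    have h0 : LSeries.term F s 0 = 0 := LSeries.term_zero F s
    have h1 : LSeries.term F s 1 = 0 := by
      rw [LSeries.term_of_ne_zero one_ne_zero, hF, logMul_iterate]
      simp [zero_pow (by omega : k ≠ 0)]
    rw [h0, h1]; ring
  have hnt2 : ‖LSeries.term F s 2‖ = A := by
    rw [hF, norm_term_eq k s (by norm_num), hA]
    norm_num
  intro hzero
  rw [hsplit] at hzero
  have : LSeries.term F s 2 = -∑' n : ℕ, LSeries.term F s (n + 3) := by
    linear_combination hzero
  have hAle : A ≤ 0.958 * A := by
    calc A = ‖LSeries.term F s 2‖ := hnt2.symm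
      _ = ‖∑' n : ℕ, LSeries.term F s (n + 3)‖ := by rw [this, norm_neg]
      _ ≤ 0.958 * A := hR
  nlinarith [hA0, hAle]
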